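/- arXiv:1307.5482 — 5 statements merged into one kernel-verified Lean document; each statement's English description precedes it below -/
import Mathlib

section
/- For any two oriented circles c₁ = (x₁, r₁) and c₂ = (x₂, r₂) in the Euclidean plane, c₁ and c₂ are tangent as oriented circles if and only if the power P(c₁, c₂) = ‖x₁ − x₂‖² − (r₁ − r₂)² is zero. -/
open RealInnerProductSpace

noncomputable section

/-- The Euclidean plane. -/
abbrev Pl := EuclideanSpace ℝ (Fin 2)

/-- Two oriented circles `(x₁, r₁)` and `(x₂, r₂)` are tangent: the underlying circles
touch at a point `p` with the same oriented tangent line there. -/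
def OrientedTangent (x₁ : Pl) (r₁ : ℝ) (x₂ : Pl) (r₂ : ℝ) : Prop :=
  ∃ p : Pl, dist p x₁ = |r₁| ∧ dist p x₂ = |r₂| ∧ r₂ • (p - x₁) = r₁ • (p - x₂)

/-- Two oriented circles are tangent iff the power of one with respect to the other
vanishes. -/
theorem orientedTangent_iff_power_eq_zero (x₁ x₂ : Pl) (r₁ r₂ : ℝ) :
    OrientedTangent x₁ r₁ x₂ r₂ ↔ ‖x₁ - x₂‖ ^ 2 - (r₁ - r₂) ^ 2 = 0 := by
  constructor
  · rintro ⟨p, h₁, h₂, h₃⟩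
    rw [dist_eq_norm] at h₁ h₂
    have key : ⟪p - x₂, p - x₁⟫ = r₁ * r₂ := by
      rcases eq_or_ne r₂ 0 with hr2 | hr2
      · have : p - x₂ = 0 := by
          rw [← norm_eq_zero, h₂, hr2, abs_zero]
        simp [this, hr2]
      · have hu : p - x₁ = (r₁ / r₂) • (p - x₂) := by
          have := congrArg (fun v => (r₂⁻¹ : ℝ) • v) h₃
          simp only [smul_smul, inv_mul_cancel₀ hr2, one_smul] at this
          rw [this]; ring_nf
        rw [hu, real_inner_smul_right, real_inner_self_eq_norm_sq, h₂, sq_abs]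
        field_simp
    have hx : x₁ - x₂ = (p - x₂) - (p - x₁) := by abel
    have hn : ‖x₁ - x₂‖ ^ 2 = ‖p - x₂‖ ^ 2 - 2 * ⟪p - x₂, p - x₁⟫ + ‖p - x₁‖ ^ 2 := by
      rw [hx]; exact norm_sub_sq_real _ _
    rw [hn, key, h₁, h₂, sq_abs, sq_abs]
    ring
  · intro h
    rcases eq_or_ne r₁ r₂ with hr | hr
    · have hx : x₁ = x₂ := by
        have h0 : ‖x₁ - x₂‖ ^ 2 = 0 := by rw [hr] at h; simpa using h
        have : ‖x₁ - x₂‖ = 0 := by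
          have := sq_eq_zero_iff.mp h0
          exact this
        exact sub_eq_zero.mp (norm_eq_zero.mp this)
      refine ⟨x₁ + r₁ • (EuclideanSpace.single 0 1 : Pl), ?_, ?_, ?_⟩
      · simp [dist_eq_norm, norm_smul]
      · rw [← hx, ← hr]; simp [dist_eq_norm, norm_smul]
      · rw [← hx, ← hr]
    · have hr' : r₁ - r₂ ≠ 0 := sub_ne_zero.mpr hr
      have hnorm : ‖x₁ - x₂‖ = |r₁ - r₂| := by
        have h1 : ‖x₁ - x₂‖ ^ 2 = |r₁ - r₂| ^ 2 := by rw [sq_abs]; linarith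
        exact by
          nlinarith [norm_nonneg (x₁ - x₂), abs_nonneg (r₁ - r₂), sq_nonneg (‖x₁ - x₂‖ - |r₁ - r₂|), sq_nonneg (‖x₁ - x₂‖ + |r₁ - r₂|)]
      set t : ℝ := r₁ / (r₁ - r₂) with ht
      refine ⟨x₁ + t • (x₂ - x₁), ?_, ?_, ?_⟩
      · rw [dist_eq_norm]
        have : x₁ + t • (x₂ - x₁) - x₁ = t • (x₂ - x₁) := by abel
        rw [this, norm_smul, Real.norm_eq_abs, norm_sub_rev, hnorm, ← abs_mul]
        congr 1
        rw [ht]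
        field_simp
      · rw [dist_eq_norm]
        have : x₁ + t • (x₂ - x₁) - x₂ = (t - 1) • (x₂ - x₁) := by
          rw [sub_smul, one_smul]; abel
        rw [this, norm_smul, Real.norm_eq_abs, norm_sub_rev, hnorm, ← abs_mul]
        congr 1
        rw [ht]
        field_simp
        ring
      · have e1 : x₁ + t • (x₂ - x₁) - x₁ = t • (x₂ - x₁) := by abel
        have e2 : x₁ + t • (x₂ - x₁) - x₂ = (t - 1) • (x₂ - x₁) := by
          rw [sub_smul, one_smul]; abel
        rw [e1, e2, smul_smul, smul_smul]
        congr 1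
        rw [ht]
        field_simp
        ring
end
end

section
/- Let c₁ = (x₁, r₁) and c₂ = (x₂, r₂) be distinct oriented circles, and let T = {(u, t) ∈ ℝ² × ℝ : ‖u‖ = 1 ∧ ⟪u, x₁⟫ − t = r₁ ∧ ⟪u, x₂⟫ − t = r₂} be their set of common oriented tangent lines. Then T has exactly 2 elements if P(c₁, c₂) > 0, exactly 1 element if P(c₁, c₂) = 0, and is empty if P(c₁, c₂) < 0. -/
open RealInnerProductSpace

noncomputable section

/-- The set of common oriented tangent lines of the oriented circles `(x₁, r₁)` and
`(x₂, r₂)`: an oriented line is a pair `(u, t)` with `‖u‖ = 1`, tangent to `(x, r)`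
iff `⟪u, x⟫ - t = r`. -/
def CommonTangents (x₁ : Pl) (r₁ : ℝ) (x₂ : Pl) (r₂ : ℝ) : Set (Pl × ℝ) :=
  {ut | ‖ut.1‖ = 1 ∧ ⟪ut.1, x₁⟫ - ut.2 = r₁ ∧ ⟪ut.1, x₂⟫ - ut.2 = r₂}

namespace CTaux

def vec2 (a b : ℝ) : Pl := (WithLp.equiv 2 (Fin 2 → ℝ)).symm ![a, b]

@[simp] lemma vec2_zero (a b : ℝ) : vec2 a b 0 = a := rfl
@[simp] lemma vec2_one (a b : ℝ) : vec2 a b 1 = b := rfl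

lemma eq_vec2_iff (u : Pl) (a b : ℝ) : u = vec2 a b ↔ u 0 = a ∧ u 1 = b := by
  constructor
  · rintro rfl; exact ⟨rfl, rfl⟩
  · rintro ⟨h0, h1⟩
    ext i
    fin_cases i <;> simpa

lemma mem_ct_iff (x₁ x₂ u : Pl) (r₁ r₂ t : ℝ) :
    (u, t) ∈ CommonTangents x₁ r₁ x₂ r₂ ↔
      (u 0)^2 + (u 1)^2 = 1 ∧
      u 0 * (x₁ 0 - x₂ 0) + u 1 * (x₁ 1 - x₂ 1) = r₁ - r₂ ∧
      t = u 0 * x₁ 0 + u 1 * x₁ 1 - r₁ := by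
  have hn : ‖u‖^2 = u 0 ^2 + u 1 ^ 2 := by
    rw [← real_inner_self_eq_norm_sq]
    simp only [PiLp.inner_apply, RCLike.inner_apply, Fin.sum_univ_two]; simp; ring
  have hnorm : ‖u‖ = 1 ↔ (u 0)^2 + (u 1)^2 = 1 := by
    constructor
    · intro h1; rw [← hn, h1]; ring
    · intro h1; nlinarith [norm_nonneg u]
  have hi1 : ⟪u, x₁⟫ = u 0 * x₁ 0 + u 1 * x₁ 1 := by
    simp [PiLp.inner_apply, RCLike.inner_apply, Fin.sum_univ_two]; ring
  have hi2 : ⟪u, x₂⟫ = u 0 * x₂ 0 + u 1 * x₂ 1 := by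
    simp [PiLp.inner_apply, RCLike.inner_apply, Fin.sum_univ_two]; ring
  simp only [CommonTangents, Set.mem_setOf_eq, hi1, hi2, hnorm]
  constructor
  · rintro ⟨h1, h2, h3⟩
    exact ⟨h1, by linarith, by linarith⟩
  · rintro ⟨h1, h2, h3⟩
    exact ⟨h1, by linarith, by linarith⟩

end CTaux

set_option maxHeartbeats 1000000 in
open CTaux in
/-- Two distinct oriented circles have exactly 2 common oriented tangent lines when
`P(c₁, c₂) > 0`, exactly 1 when `P(c₁, c₂) = 0`, and none when `P(c₁, c₂) < 0`. -/
theorem commonTangents_card (x₁ x₂ : Pl) (r₁ r₂ : ℝ) (h : (x₁, r₁) ≠ (x₂, r₂)) :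
    (0 < ‖x₁ - x₂‖ ^ 2 - (r₁ - r₂) ^ 2 → (CommonTangents x₁ r₁ x₂ r₂).encard = 2) ∧
    (‖x₁ - x₂‖ ^ 2 - (r₁ - r₂) ^ 2 = 0 → (CommonTangents x₁ r₁ x₂ r₂).encard = 1) ∧
    (‖x₁ - x₂‖ ^ 2 - (r₁ - r₂) ^ 2 < 0 → CommonTangents x₁ r₁ x₂ r₂ = ∅) := by
  set a : ℝ := x₁ 0 - x₂ 0 with ha
  set b : ℝ := x₁ 1 - x₂ 1 with hb
  set ρ : ℝ := r₁ - r₂ with hρ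
  have hnd : ‖x₁ - x₂‖^2 = a^2 + b^2 := by
    rw [← real_inner_self_eq_norm_sq]
    simp only [PiLp.inner_apply, RCLike.inner_apply, Fin.sum_univ_two, ha, hb]; simp; ring
  set P : ℝ := a^2 + b^2 - ρ^2 with hP
  have hPeq : ‖x₁ - x₂‖ ^ 2 - (r₁ - r₂) ^ 2 = P := by rw [hnd]
  rw [hPeq]
  -- the key quantity for any common tangent
  have key : ∀ u : Pl, ∀ t : ℝ, (u, t) ∈ CommonTangents x₁ r₁ x₂ r₂ →
      (u 0 * b - u 1 * a)^2 = P := by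
    intro u t hu
    rw [mem_ct_iff] at hu
    obtain ⟨e1, e2, -⟩ := hu
    rw [hP]
    linear_combination (a^2 + b^2) * e1 - (u 0 * a + u 1 * b + ρ) * e2
  -- nondegeneracy: if a = b = 0 then ρ ≠ 0
  have hnd0 : a = 0 → b = 0 → ρ ≠ 0 := by
    intro ha0 hb0 hρ0
    apply h
    have hx : x₁ = x₂ := by
      ext i
      fin_cases i
      · simpa using sub_eq_zero.mp (by simpa [ha] using ha0)
      · simpa using sub_eq_zero.mp (by simpa [hb] using hb0)
    have hr : r₁ = r₂ := by have := sub_eq_zero.mp (by simpa [hρ] using hρ0); exact this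
    simp [hx, hr]
  -- main description for P ≥ 0
  have main : 0 ≤ P → ∀ s : ℝ, s^2 = P →
      CommonTangents x₁ r₁ x₂ r₂ =
        {(vec2 ((ρ*a - s*b)/(a^2+b^2)) ((ρ*b + s*a)/(a^2+b^2)),
          ((ρ*a - s*b)/(a^2+b^2)) * x₁ 0 + ((ρ*b + s*a)/(a^2+b^2)) * x₁ 1 - r₁),
         (vec2 ((ρ*a + s*b)/(a^2+b^2)) ((ρ*b - s*a)/(a^2+b^2)),
          ((ρ*a + s*b)/(a^2+b^2)) * x₁ 0 + ((ρ*b - s*a)/(a^2+b^2)) * x₁ 1 - r₁)} := by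
    intro hP0 s hs
    have hD : 0 < a^2 + b^2 := by
      rcases lt_or_eq_of_le (by positivity : (0:ℝ) ≤ a^2 + b^2) with hlt | heq
      · exact hlt
      · exfalso
        have ha0 : a = 0 := by nlinarith
        have hb0 : b = 0 := by nlinarith
        have hρ0 : ρ = 0 := by nlinarith
        exact hnd0 ha0 hb0 hρ0
    have hD' : a^2 + b^2 ≠ 0 := ne_of_gt hD
    ext ⟨u, t⟩
    rw [mem_ct_iff]
    simp only [Set.mem_insert_iff, Set.mem_singleton_iff, Prod.mk.injEq, eq_vec2_iff]
    constructor
    · rintro ⟨e1, e2, e3⟩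
      have hw : (u 0 * b - u 1 * a)^2 = s^2 := by
        rw [hs]; exact key u t (by rw [mem_ct_iff]; exact ⟨e1, e2, e3⟩)
      have : (u 0 * b - u 1 * a - s) * (u 0 * b - u 1 * a + s) = 0 := by
        linear_combination hw
      rcases mul_eq_zero.mp this with hw' | hw'
      · -- u0 b - u1 a = s : minus solution
        right
        have hu0 : u 0 = (ρ*a + s*b)/(a^2 + b^2) := by
          field_simp
          linear_combination a * e2 + b * hw'
        have hu1 : u 1 = (ρ*b - s*a)/(a^2 + b^2) := by
          field_simp
          linear_combination b * e2 - a * hw'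
        exact ⟨⟨hu0, hu1⟩, by rw [e3, hu0, hu1]⟩
      · -- u0 b - u1 a = -s : plus solution
        left
        have hu0 : u 0 = (ρ*a - s*b)/(a^2 + b^2) := by
          field_simp
          linear_combination a * e2 + b * hw'
        have hu1 : u 1 = (ρ*b + s*a)/(a^2 + b^2) := by
          field_simp
          linear_combination b * e2 - a * hw'
        exact ⟨⟨hu0, hu1⟩, by rw [e3, hu0, hu1]⟩
    · rintro (⟨⟨h0, h1⟩, ht⟩ | ⟨⟨h0, h1⟩, ht⟩) <;>
      · refine ⟨?_, ?_, by rw [ht, h0, h1]⟩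
        · rw [h0, h1]; field_simp; linear_combination (a^2+b^2) * hs
        · rw [h0, h1]; field_simp; ring
  refine ⟨?_, ?_, ?_⟩
  · -- P > 0 : two tangents
    intro hPpos
    set s : ℝ := Real.sqrt P with hsdef
    have hs : s^2 = P := Real.sq_sqrt hPpos.le
    have hs0 : 0 < s := Real.sqrt_pos.mpr hPpos
    rw [main hPpos.le s hs]
    rw [Set.encard_pair]
    intro hcontra
    rw [Prod.mk.injEq] at hcontra
    obtain ⟨hveq, -⟩ := hcontra
    have hD : 0 < a^2 + b^2 := by nlinarith
    have h0 : (ρ*a - s*b)/(a^2+b^2) = (ρ*a + s*b)/(a^2+b^2) := by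
      have := congrArg (fun v : Pl => v 0) hveq; simpa using this
    have h1 : (ρ*b + s*a)/(a^2+b^2) = (ρ*b - s*a)/(a^2+b^2) := by
      have := congrArg (fun v : Pl => v 1) hveq; simpa using this
    have hb0 : s * b = 0 := by
      field_simp at h0; linarith
    have ha0 : s * a = 0 := by
      field_simp at h1; linarith
    have hbz : b = 0 := by
      rcases mul_eq_zero.mp hb0 with h' | h'
      · exact absurd h' hs0.ne'
      · exact h'
    have haz : a = 0 := by
      rcases mul_eq_zero.mp ha0 with h' | h'
      · exact absurd h' hs0.ne'
      · exact h'
    nlinarith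
  · -- P = 0 : one tangent
    intro hP0
    rw [main hP0.ge 0 (by rw [hP0]; ring)]
    simp only [zero_mul, mul_zero, sub_zero, add_zero, zero_sub]
    rw [Set.pair_eq_singleton]
    exact Set.encard_singleton _
  · -- P < 0 : no tangents
    intro hPneg
    ext ⟨u, t⟩
    simp only [Set.mem_empty_iff_false, iff_false]
    intro hu
    have := key u t hu
    nlinarith [sq_nonneg (u 0 * b - u 1 * a)]
end
end

section
/- Let c₁ = (x₁, r₁), c₂ = (x₂, r₂), c₃ = (x₃, r₃) be pairwise distinct oriented circles satisfying Q(cᵢ − cⱼ) = 0 for all i ≠ j (each pair is orientedly tangent). Then there exists a single point p ∈ ℝ² lying on all three underlying circles: dist p xᵢ = |rᵢ| for i = 1, 2, 3. -/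
open RealInnerProductSpace

noncomputable section

/-- The Lorentz quadratic form `Q(x, r) = ‖x‖² − r²` on the space of oriented circles;
two oriented circles `c`, `c'` are orientedly tangent exactly when `Q(c − c') = 0`. -/
def Q (c : Pl × ℝ) : ℝ := ‖c.1‖ ^ 2 - c.2 ^ 2

lemma dist_eq_abs_iff (p x : Pl) (r : ℝ) :
    dist p x = |r| ↔ ⟪p - x, p - x⟫ = r ^ 2 := by
  rw [real_inner_self_eq_norm_sq, ← dist_eq_norm]
  constructor
  · intro h; rw [h, sq_abs]
  · intro h
    have h1 : (0:ℝ) ≤ dist p x := dist_nonneg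
    nlinarith [abs_nonneg r, sq_abs r]

lemma expand_inner (w a : Pl) (s : ℝ) :
    ⟪w - s • a, w - s • a⟫ = ⟪w, w⟫ - 2*s*⟪w, a⟫ + s^2*⟪a, a⟫ := by
  simp only [inner_sub_left, inner_sub_right, real_inner_smul_left, real_inner_smul_right,
    real_inner_comm a w]
  ring

/-- If three pairwise distinct oriented circles are pairwise orientedly tangent,
then there is a single point lying on all three underlying circles. -/
theorem pairwise_tangent_common_point (c₁ c₂ c₃ : Pl × ℝ)
    (h₁₂ : c₁ ≠ c₂) (h₁₃ : c₁ ≠ c₃) (h₂₃ : c₂ ≠ c₃)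
    (t₁₂ : Q (c₁ - c₂) = 0) (t₁₃ : Q (c₁ - c₃) = 0) (t₂₃ : Q (c₂ - c₃) = 0) :
    ∃! p : Pl, dist p c₁.1 = |c₁.2| ∧ dist p c₂.1 = |c₂.2| ∧ dist p c₃.1 = |c₃.2| := by
  obtain ⟨x₁, r₁⟩ := c₁
  obtain ⟨x₂, r₂⟩ := c₂
  obtain ⟨x₃, r₃⟩ := c₃
  simp only [Q, Prod.mk_sub_mk] at t₁₂ t₁₃ t₂₃
  simp only [ne_eq, Prod.mk.injEq, not_and] at h₁₂ h₁₃ h₂₃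
  set a := x₂ - x₁ with ha
  set b := x₃ - x₁ with hb
  have e₁₂ : ⟪a, a⟫ = (r₁ - r₂) ^ 2 := by
    rw [real_inner_self_eq_norm_sq]
    have h : ‖a‖ = ‖x₁ - x₂‖ := by rw [ha, norm_sub_rev]
    rw [h]; linarith
  have e₁₃ : ⟪b, b⟫ = (r₁ - r₃) ^ 2 := by
    rw [real_inner_self_eq_norm_sq]
    have h : ‖b‖ = ‖x₁ - x₃‖ := by rw [hb, norm_sub_rev]
    rw [h]; linarith
  have e₂₃ : ⟪a - b, a - b⟫ = (r₂ - r₃) ^ 2 := by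
    rw [real_inner_self_eq_norm_sq]
    have h : a - b = x₂ - x₃ := by rw [ha, hb]; abel
    rw [h]; linarith
  have eab : ⟪b, a⟫ = (r₁ - r₂) * (r₁ - r₃) := by
    have h := e₂₃
    simp only [inner_sub_left, inner_sub_right, real_inner_comm b a] at h ⊢
    linear_combination (e₁₂ + e₁₃ - h) / 2
  have hr : r₁ ≠ r₂ := by
    intro h
    have h0 : ⟪a, a⟫ = 0 := by rw [e₁₂, h]; ring
    rw [inner_self_eq_zero, ha, sub_eq_zero] at h0
    exact h₁₂ h0.symm h
  have hne : r₁ - r₂ ≠ 0 := sub_ne_zero.mpr hr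
  set l : ℝ := r₁ / (r₁ - r₂) with hl
  refine ⟨x₁ + l • a, ⟨?_, ?_, ?_⟩, ?_⟩
  · rw [dist_eq_abs_iff]
    have h : x₁ + l • a - (x₁, r₁).1 = l • a := by simp
    rw [h, real_inner_smul_left, real_inner_smul_right, e₁₂, hl]
    field_simp
  · rw [dist_eq_abs_iff]
    have h : x₁ + l • a - (x₂, r₂).1 = (l - 1) • a := by
      rw [sub_smul, one_smul, ha]; abel
    rw [h, real_inner_smul_left, real_inner_smul_right, e₁₂, hl]
    field_simp
    ring
  · rw [dist_eq_abs_iff]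
    have h : x₁ + l • a - (x₃, r₃).1 = -(b - l • a) := by
      rw [hb]; abel
    rw [h, inner_neg_neg, expand_inner, e₁₂, e₁₃, eab, hl]
    field_simp
    ring
  · rintro y ⟨hy1, hy2, -⟩
    rw [dist_eq_abs_iff] at hy1 hy2
    set w := y - x₁ with hw
    have hwa : y - (x₂, r₂).1 = w - a := by rw [hw, ha]; abel
    rw [hwa] at hy2
    have hy2' : ⟪w, w⟫ - 2*1*⟪w, a⟫ + 1^2*⟪a, a⟫ = r₂ ^ 2 := by
      rw [← expand_inner, one_smul]; exact hy2
    simp only at hy1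
    have hwia : ⟪w, a⟫ = r₁ * (r₁ - r₂) := by
      linear_combination (hy1 + e₁₂ - hy2') / 2
    have hz : ⟪w - l • a, w - l • a⟫ = 0 := by
      rw [expand_inner, hy1, hwia, e₁₂, hl]
      field_simp
      ring
    rw [inner_self_eq_zero, sub_eq_zero] at hz
    have : y = x₁ + w := by rw [hw]; abel
    rw [this, hz]
end
end

section
/- Let C₁ = K(x₁, r₁), C₂ = K(x₂, r₂), C₃ = K(x₃, r₃) be circles with rᵢ > 0 such that C₂ strictly separates C₁ and C₃, namely ‖x₁ − x₂‖ + r₁ < r₂ (the closed disk of C₁ lies in the open disk of C₂) and ‖x₃ − x₂‖ > r₂ + r₃ (the closed disk of C₃ lies in the open exterior of C₂). Then the Apollonius problem for (C₁, C₂, C₃) has no solution: there is no circle tangent to all three, no line tangent to all three, and no point lying on all three. -/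
open RealInnerProductSpace

noncomputable section

/-- The circle of center `x` and radius `r` in the Euclidean plane. -/
def K (x : Pl) (r : ℝ) : Set Pl := {p | dist p x = r}

/-- Two circles, given by centers and (positive) radii, are tangent. -/
def CircleTangent (y : Pl) (s : ℝ) (x : Pl) (r : ℝ) : Prop :=
  dist y x = s + r ∨ dist y x = |s - r|

/-- A line (a 1-dimensional affine subspace of the plane) is tangent to a circle iff it
meets it in exactly one point. -/
def LineTangent (L : AffineSubspace ℝ Pl) (x : Pl) (r : ℝ) : Prop :=
  ∃! p, p ∈ (L : Set Pl) ∩ K x r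

/-- Solutions of the Apollonius problem for three circles with centers `x i` and radii
`r i`: a solution is either a circle `(y, s)` with `s > 0` tangent to all three, or a
line (1-dimensional affine subspace) tangent to all three, or a point lying on all
three. The solution set is the disjoint union (sum type) of these three sets. -/
def ApolloniusSolutions (x : Fin 3 → Pl) (r : Fin 3 → ℝ) : Type :=
  {ys : Pl × ℝ // 0 < ys.2 ∧ ∀ i, CircleTangent ys.1 ys.2 (x i) (r i)} ⊕
  {L : AffineSubspace ℝ Pl // Module.finrank ℝ L.direction = 1 ∧
    ∀ i, LineTangent L (x i) (r i)} ⊕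
  {p : Pl // ∀ i, p ∈ K (x i) (r i)}



lemma dist_comb₁ (y x : Pl) (c : ℝ) : dist (y + c • (x - y)) y = |c| * dist y x := by
  rw [dist_eq_norm, add_sub_cancel_left, norm_smul, Real.norm_eq_abs, dist_eq_norm,
    norm_sub_rev]

lemma dist_comb₂ (y x : Pl) (c : ℝ) : dist (y + c • (x - y)) x = |c - 1| * dist y x := by
  have h : y + c • (x - y) - x = (c - 1) • (x - y) := by
    rw [sub_smul, one_smul]; abel
  rw [dist_eq_norm, h, norm_smul, Real.norm_eq_abs, dist_eq_norm, norm_sub_rev]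

lemma tangent_intersect {y x : Pl} {s r : ℝ} (hs : 0 < s) (hr : 0 < r)
    (h : dist y x = s + r ∨ dist y x = |s - r|) :
    ∃ q : Pl, dist q y = s ∧ dist q x = r := by
  set d := dist y x with hd
  rcases eq_or_lt_of_le (dist_nonneg : (0:ℝ) ≤ d) with hd0 | hd0
  · -- d = 0, so s = r and x = y
    have hyx : y = x := by rw [← dist_eq_zero, ← hd0]
    have hsr : s = r := by
      rcases h with h | h
      · linarith
      · have h0 : |s - r| = 0 := by rw [← h, hd, ← hd0]
        have := abs_eq_zero.mp h0; linarith
    refine ⟨y + s • (EuclideanSpace.single 0 1 : Pl), ?_, ?_⟩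
    · rw [dist_eq_norm, add_sub_cancel_left, norm_smul, Real.norm_eq_abs,
        EuclideanSpace.norm_single, abs_of_pos hs]
      simp
    · rw [← hyx, ← hsr, dist_eq_norm, add_sub_cancel_left, norm_smul, Real.norm_eq_abs,
        EuclideanSpace.norm_single, abs_of_pos hs]
      simp
  · have hdne : d ≠ 0 := ne_of_gt hd0
    have hcase : d = s + r ∨ d = s - r ∨ d = r - s := by
      rcases h with h | h
      · exact Or.inl h
      · rcases abs_cases (s - r) with ⟨he, _⟩ | ⟨he, _⟩
        · exact Or.inr (Or.inl (by linarith [h, he]))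
        · exact Or.inr (Or.inr (by rw [h, he]; ring))
    rcases hcase with hc | hc | hc
    · refine ⟨y + (s/d) • (x - y), ?_, ?_⟩
      · rw [dist_comb₁, ← hd, abs_of_pos (by positivity)]
        field_simp
      · rw [dist_comb₂, ← hd]
        have : |s/d - 1| = r/d := by
          rw [abs_of_nonpos (by rw [sub_nonpos, div_le_one hd0]; linarith)]
          field_simp; linarith
        rw [this]; field_simp
    · refine ⟨y + (s/d) • (x - y), ?_, ?_⟩
      · rw [dist_comb₁, ← hd, abs_of_pos (by positivity)]
        field_simp
      · rw [dist_comb₂, ← hd]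
        have : |s/d - 1| = r/d := by
          rw [abs_of_nonneg (by rw [sub_nonneg, le_div_iff₀ hd0]; nlinarith)]
          field_simp; linarith
        rw [this]; field_simp
    · refine ⟨y + (-(s/d)) • (x - y), ?_, ?_⟩
      · rw [dist_comb₁, ← hd, abs_neg, abs_of_pos (by positivity)]
        field_simp
      · rw [dist_comb₂, ← hd]
        have : |-(s/d) - 1| = r/d := by
          have hle : -(s/d) - 1 ≤ 0 := by
            have : 0 < s / d := div_pos hs hd0
            linarith
          rw [abs_of_nonpos hle]
          field_simp; linarith
        rw [this]; field_simp

/-- If `C₂` strictly separates `C₁` and `C₃` (the closed disk of `C₁` lies in the open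
disk of `C₂`, and the closed disk of `C₃` lies in the open exterior of `C₂`), then the
Apollonius problem has no solution: no circle, no line and no point is a solution. -/
theorem apollonius_separating_no_solution (x₁ x₂ x₃ : Pl) (r₁ r₂ r₃ : ℝ)
    (h₁ : 0 < r₁) (h₂ : 0 < r₂) (h₃ : 0 < r₃)
    (hsep₁ : ‖x₁ - x₂‖ + r₁ < r₂) (hsep₃ : ‖x₃ - x₂‖ > r₂ + r₃) :
    IsEmpty (ApolloniusSolutions ![x₁, x₂, x₃] ![r₁, r₂, r₃]) := by
  have hd12 : dist x₁ x₂ = ‖x₁ - x₂‖ := dist_eq_norm _ _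
  have hd32 : dist x₃ x₂ = ‖x₃ - x₂‖ := dist_eq_norm _ _
  constructor
  rintro (⟨⟨y, s⟩, hs, htan⟩ | ⟨L, -, htan⟩ | ⟨p, hp⟩)
  · have ht1 : CircleTangent y s x₁ r₁ := htan 0
    have ht2 : CircleTangent y s x₂ r₂ := htan 1
    have ht3 : CircleTangent y s x₃ r₃ := htan 2
    obtain ⟨q₁, hq₁y, hq₁⟩ := tangent_intersect hs h₁ ht1
    obtain ⟨q₃, hq₃y, hq₃⟩ := tangent_intersect hs h₃ ht3
    have hq₁x₂ : dist q₁ x₂ < r₂ := by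
      have := dist_triangle q₁ x₁ x₂
      rw [hq₁, hd12] at this; linarith
    have hq₃x₂ : dist q₃ x₂ > r₂ := by
      have := dist_triangle x₃ q₃ x₂
      rw [dist_comm x₃ q₃, hq₃] at this
      rw [hd32] at this; linarith
    rcases ht2 with he | he
    · have ht := dist_triangle y q₁ x₂
      rw [dist_comm y q₁, hq₁y, he] at ht; linarith
    · rcases abs_cases (s - r₂) with ⟨habs, _⟩ | ⟨habs, _⟩
      · have ht := dist_triangle q₁ x₂ y
        rw [dist_comm x₂ y, he, habs] at ht
        rw [hq₁y] at ht; linarith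
      · have ht := dist_triangle q₃ y x₂
        rw [hq₃y, he, habs] at ht; linarith
  · have ht1 : LineTangent L x₁ r₁ := htan 0
    have ht2 : LineTangent L x₂ r₂ := htan 1
    have ht3 : LineTangent L x₃ r₃ := htan 2
    obtain ⟨a, ⟨haL, haK⟩, -⟩ := ht1
    obtain ⟨c, ⟨hcL, hcK⟩, -⟩ := ht3
    have haK' : dist a x₁ = r₁ := haK
    have hcK' : dist c x₃ = r₃ := hcK
    have ha2 : dist a x₂ < r₂ := by
      have := dist_triangle a x₁ x₂
      rw [haK', hd12] at this; linarith
    have hc2 : dist c x₂ > r₂ := by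
      have := dist_triangle x₃ c x₂
      rw [dist_comm x₃ c, hcK', hd32] at this; linarith
    have hca : c - a ≠ 0 := by
      intro h
      rw [sub_eq_zero] at h
      rw [h] at hc2; linarith
    have hnca : (0:ℝ) < ‖c - a‖ := norm_pos_iff.2 hca
    set q : ℝ → Pl := fun t => a + t • (c - a) with hq
    have hqmem : ∀ t, q t ∈ L := by
      intro t
      have := AffineSubspace.smul_vsub_vadd_mem L t hcL haL haL
      simpa [hq, vsub_eq_sub, vadd_eq_add, add_comm] using this
    have hgcont : Continuous fun t => dist (q t) x₂ := by
      apply Continuous.dist _ continuous_const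
      exact continuous_const.add (continuous_id.smul continuous_const)
    have hq0 : q 0 = a := by simp [hq]
    have hq1 : q 1 = c := by simp [hq]
    set T : ℝ := (r₂ + dist a x₂ + 1) / ‖c - a‖ with hT
    have hTpos : 0 < T := div_pos (by linarith [dist_nonneg (x := a) (y := x₂)]) hnca
    have hgT : dist (q (-T)) x₂ ≥ r₂ + 1 := by
      have htri := dist_triangle (q (-T)) x₂ a
      have hd : dist (q (-T)) a = r₂ + dist a x₂ + 1 := by
        rw [hq]
        simp only []
        rw [dist_eq_norm, add_sub_cancel_left, norm_smul, Real.norm_eq_abs,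
          abs_neg, abs_of_pos hTpos, hT]
        field_simp
      rw [hd, dist_comm x₂ a] at htri; linarith
    -- first root in [-T, 0]
    have h1' : r₂ ∈ Set.uIcc (dist (q (-T)) x₂) (dist (q 0) x₂) := by
      rw [hq0]
      rcases le_total (dist (q (-T)) x₂) (dist a x₂) with h | h
      · exact Set.mem_uIcc.2 (Or.inl ⟨by linarith, by linarith⟩)
      · exact Set.mem_uIcc.2 (Or.inr ⟨by linarith, by linarith⟩)
    obtain ⟨t', ht'mem, ht'⟩ := intermediate_value_uIcc (hgcont.continuousOn) h1'
    have h2' : r₂ ∈ Set.uIcc (dist (q 0) x₂) (dist (q 1) x₂) := by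
      rw [hq0, hq1]
      exact Set.mem_uIcc.2 (Or.inl ⟨le_of_lt ha2, le_of_lt hc2⟩)
    obtain ⟨t'', ht''mem, ht''⟩ := intermediate_value_uIcc (hgcont.continuousOn) h2'
    have ht'le : t' ≤ 0 := by
      rw [Set.uIcc_of_le (by linarith : -T ≤ 0)] at ht'mem
      exact ht'mem.2
    have ht''ge : 0 ≤ t'' := by
      rw [Set.uIcc_of_le (by norm_num : (0:ℝ) ≤ 1)] at ht''mem
      exact ht''mem.1
    have ht'ne : t' ≠ 0 := by
      intro h; rw [h] at ht'; simp only [hq0] at ht'; linarith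
    have htne : t' ≠ t'' := by
      intro h; exact ht'ne (le_antisymm ht'le (h ▸ ht''ge))
    obtain ⟨p₀, -, hup⟩ := ht2
    have he1 : q t' = p₀ := hup _ ⟨hqmem t', ht'⟩
    have he2 : q t'' = p₀ := hup _ ⟨hqmem t'', ht''⟩
    apply htne
    have : q t' = q t'' := he1.trans he2.symm
    rw [hq] at this
    simp only [add_right_inj] at this
    have := sub_eq_zero.2 this
    rw [← sub_smul] at this
    rcases smul_eq_zero.1 this with h | h
    · exact sub_eq_zero.1 h
    · exact absurd h hca
  · have hp1 : dist p x₁ = r₁ := hp 0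
    have hp2 : dist p x₂ = r₂ := hp 1
    have := dist_triangle p x₁ x₂
    rw [hp1, hp2, hd12] at this; linarith
end
end

section
/- Let C₁ = K(x₁, r₁), C₂ = K(x₂, r₂), C₃ = K(x₃, r₃) be circles with rᵢ > 0 such that C₁ strictly surrounds both C₂ and C₃, which are externally disjoint from each other: ‖x₂ − x₁‖ + r₂ < r₁, ‖x₃ − x₁‖ + r₃ < r₁, and ‖x₂ − x₃‖ > r₂ + r₃. Then the Apollonius problem for (C₁, C₂, C₃) has exactly 8 solutions. -/
open RealInnerProductSpace

noncomputable section

lemma norm_eq_iff_coords (u : Pl) (r : ℝ) (hr : 0 ≤ r) :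
    ‖u‖ = r ↔ (u 0)^2 + (u 1)^2 = r^2 := by
  have h2 : ‖u‖^2 = (u 0)^2 + (u 1)^2 := by
    rw [EuclideanSpace.norm_eq, Real.sq_sqrt (by positivity)]
    simp [Fin.sum_univ_two]
  constructor
  · intro h; rw [← h2, h]
  · intro h
    calc ‖u‖ = √(‖u‖^2) := (Real.sqrt_sq (norm_nonneg u)).symm
    _ = √(r^2) := by rw [h2, h]
    _ = r := Real.sqrt_sq hr

lemma inner_coords (w u : Pl) : ⟪w, u⟫ = w 0 * u 0 + w 1 * u 1 := by
  simp [PiLp.inner_apply, Fin.sum_univ_two]; ring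

lemma circle_line_two (w : Pl) (c : ℝ) (h : c^2 < ‖w‖^2) :
    {u : Pl | ‖u‖ = 1 ∧ ⟪w, u⟫ = c}.ncard = 2 ∧
    {u : Pl | ‖u‖ = 1 ∧ ⟪w, u⟫ = c}.Finite := by
  have hncoords : ‖w‖^2 = (w 0)^2 + (w 1)^2 := by
    rw [EuclideanSpace.norm_eq, Real.sq_sqrt (by positivity)]
    simp [Fin.sum_univ_two]
  set n : ℝ := (w 0)^2 + (w 1)^2 with hn
  rw [hncoords] at h
  have hD2 : 0 < n - c^2 := by linarith
  set D : ℝ := √(n - c^2) with hDdef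
  have hD : 0 < D := Real.sqrt_pos.mpr hD2
  have hDsq : D^2 = n - c^2 := Real.sq_sqrt (le_of_lt hD2)
  have hnpos : 0 < n := by nlinarith [sq_nonneg c]
  have hnne : n ≠ 0 := ne_of_gt hnpos
  obtain ⟨P, hP0, hP1⟩ : ∃ P : Pl, P 0 = (c * w 0 + w 1 * D)/n ∧ P 1 = (c * w 1 - w 0 * D)/n :=
    ⟨!₂[(c * w 0 + w 1 * D)/n, (c * w 1 - w 0 * D)/n], rfl, rfl⟩
  obtain ⟨Q, hQ0, hQ1⟩ : ∃ Q : Pl, Q 0 = (c * w 0 - w 1 * D)/n ∧ Q 1 = (c * w 1 + w 0 * D)/n :=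
    ⟨!₂[(c * w 0 - w 1 * D)/n, (c * w 1 + w 0 * D)/n], rfl, rfl⟩
  have hset : {u : Pl | ‖u‖ = 1 ∧ ⟪w, u⟫ = c} = {P, Q} := by
    ext u
    simp only [Set.mem_setOf_eq, Set.mem_insert_iff, Set.mem_singleton_iff]
    rw [norm_eq_iff_coords u 1 zero_le_one, inner_coords]
    constructor
    · rintro ⟨h1, h2⟩
      have hq : (w 1 * u 0 - w 0 * u 1)^2 = D^2 := by
        rw [hDsq]
        linear_combination (w 0^2 + w 1^2) * h1 - (w 0 * u 0 + w 1 * u 1 + c) * h2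
      rcases (abs_eq (le_of_lt hD)).mp (by
        rw [← Real.sqrt_sq_eq_abs, hq, Real.sqrt_sq (le_of_lt hD)]) with hcase | hcase
      · left
        ext i; fin_cases i
        · show u 0 = P 0
          rw [hP0]; field_simp
          linear_combination w 0 * h2 + w 1 * hcase
        · show u 1 = P 1
          rw [hP1]; field_simp
          linear_combination w 1 * h2 - w 0 * hcase
      · right
        ext i; fin_cases i
        · show u 0 = Q 0
          rw [hQ0]; field_simp
          linear_combination w 0 * h2 + w 1 * hcase
        · show u 1 = Q 1
          rw [hQ1]; field_simp
          linear_combination w 1 * h2 - w 0 * hcase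
    · rintro (rfl | rfl)
      · rw [hP0, hP1]
        constructor
        · field_simp; linear_combination (w 0^2 + w 1^2) * hDsq
        · field_simp; ring
      · rw [hQ0, hQ1]
        constructor
        · field_simp; linear_combination (w 0^2 + w 1^2) * hDsq
        · field_simp; ring
  have hPQ : P ≠ Q := by
    intro hEq
    have h0 : P 0 = Q 0 := by rw [hEq]
    have h1 : P 1 = Q 1 := by rw [hEq]
    rw [hP0, hQ0] at h0; rw [hP1, hQ1] at h1
    have hw1 : w 1 * D = 0 := by field_simp at h0; linarith
    have hw0 : w 0 * D = 0 := by field_simp at h1; linarith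
    have e0 : w 0 = 0 := by
      rcases mul_eq_zero.mp hw0 with h'|h'
      · exact h'
      · exact absurd h' (ne_of_gt hD)
    have e1 : w 1 = 0 := by
      rcases mul_eq_zero.mp hw1 with h'|h'
      · exact h'
      · exact absurd h' (ne_of_gt hD)
    rw [e0, e1] at hn
    norm_num at hn
    exact hnne hn
  rw [hset]
  exact ⟨Set.ncard_pair hPQ, (Set.finite_singleton Q).insert P⟩

lemma eq_of_sq_eq (x y : ℝ) (hx : 0 ≤ x) (hy : 0 ≤ y) (h : x^2 = y^2) : x = y := by
  nlinarith [sq_nonneg (x - y), sq_nonneg (x + y)]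

set_option maxHeartbeats 2000000 in
lemma ellipse_two (x₁ x₂ x₃ : Pl) (a b : ℝ)
    (ha : ‖x₁ - x₂‖ < a) (hb : ‖x₁ - x₃‖ < b) (hab : (a - b)^2 < ‖x₂ - x₃‖^2) :
    {y : Pl | dist y x₁ + dist y x₂ = a ∧ dist y x₁ + dist y x₃ = b}.ncard = 2 ∧
    {y : Pl | dist y x₁ + dist y x₂ = a ∧ dist y x₁ + dist y x₃ = b}.Finite := by
  obtain ⟨d₂, hd₂⟩ : ∃ d : Pl, d = x₁ - x₂ := ⟨_, rfl⟩
  obtain ⟨d₃, hd₃⟩ : ∃ d : Pl, d = x₁ - x₃ := ⟨_, rfl⟩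
  rw [← hd₂] at ha
  rw [← hd₃] at hb
  have hapos : 0 < a := lt_of_le_of_lt (norm_nonneg d₂) ha
  have hbpos : 0 < b := lt_of_le_of_lt (norm_nonneg d₃) hb
  obtain ⟨A, hA'⟩ : ∃ A : ℝ, A = a^2 - ‖d₂‖^2 := ⟨_, rfl⟩
  obtain ⟨B, hB'⟩ : ∃ B : ℝ, B = b^2 - ‖d₃‖^2 := ⟨_, rfl⟩
  have hA : 0 < A := by nlinarith [norm_nonneg d₂]
  have hB : 0 < B := by nlinarith [norm_nonneg d₃]
  obtain ⟨w, hw⟩ : ∃ w : Pl, w = A • d₃ - B • d₂ := ⟨_, rfl⟩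
  obtain ⟨c, hc⟩ : ∃ c : ℝ, c = a*B - b*A := ⟨_, rfl⟩
  have hw2 : ‖w‖^2 = A^2*‖d₃‖^2 - 2*(A*B)*⟪d₃,d₂⟫ + B^2*‖d₂‖^2 := by
    rw [hw, norm_sub_sq_real, real_inner_smul_left, real_inner_smul_right,
      norm_smul, norm_smul]
    simp only [Real.norm_eq_abs, mul_pow, sq_abs]
    ring
  have h23 : ‖x₂ - x₃‖^2 = ‖d₃‖^2 - 2*⟪d₃,d₂⟫ + ‖d₂‖^2 := by
    have hx : x₂ - x₃ = d₃ - d₂ := by rw [hd₂, hd₃]; abel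
    rw [hx, norm_sub_sq_real]
  have hkey : c^2 < ‖w‖^2 := by
    have hident : ‖w‖^2 - c^2 = A*B*(‖x₂ - x₃‖^2 - (a-b)^2) := by
      rw [hw2, h23, hc, hA', hB']; ring
    nlinarith [mul_pos (mul_pos hA hB) (sub_pos.mpr hab)]
  obtain ⟨hcard, hfin⟩ := circle_line_two w c hkey
  obtain ⟨φ, hφ⟩ : ∃ φ : Pl → Pl, φ = fun u => x₁ + (A/(2*(a + ⟪d₂,u⟫))) • u := ⟨_, rfl⟩
  have hden2 : ∀ u : Pl, ‖u‖ = 1 → 0 < a + ⟪d₂,u⟫ := by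
    intro u hu
    have h1 : |⟪d₂,u⟫| ≤ ‖d₂‖ := by
      have := abs_real_inner_le_norm d₂ u
      rwa [hu, mul_one] at this
    have := (abs_le.mp h1).1
    linarith
  have hYU : {y : Pl | dist y x₁ + dist y x₂ = a ∧ dist y x₁ + dist y x₃ = b}
      = φ '' {u : Pl | ‖u‖ = 1 ∧ ⟪w, u⟫ = c} := by
    ext y
    simp only [Set.mem_setOf_eq, Set.mem_image]
    constructor
    · rintro ⟨hy2, hy3⟩
      obtain ⟨t, htdef⟩ : ∃ t : ℝ, t = dist y x₁ := ⟨_, rfl⟩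
      rw [← htdef] at hy2 hy3
      have hyne : y ≠ x₁ := by
        intro hEq
        rw [htdef, hEq, dist_self] at hy2
        rw [zero_add, dist_eq_norm, ← hd₂] at hy2
        exact absurd hy2 (ne_of_lt ha)
      have ht : 0 < t := htdef ▸ dist_pos.mpr hyne
      obtain ⟨u, hudef⟩ : ∃ u : Pl, u = t⁻¹ • (y - x₁) := ⟨_, rfl⟩
      have hynorm : ‖y - x₁‖ = t := by rw [htdef, dist_eq_norm]
      have hu : ‖u‖ = 1 := by
        rw [hudef, norm_smul, hynorm, Real.norm_eq_abs, abs_inv,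
          abs_of_pos ht, inv_mul_cancel₀ (ne_of_gt ht)]
      have htu : t • u = y - x₁ := by
        rw [hudef, smul_smul, mul_inv_cancel₀ (ne_of_gt ht), one_smul]
      obtain ⟨i2, hi2⟩ : ∃ i : ℝ, i = ⟪d₂,u⟫ := ⟨_, rfl⟩
      obtain ⟨i3, hi3⟩ : ∃ i : ℝ, i = ⟪d₃,u⟫ := ⟨_, rfl⟩
      have hexp2 : ∀ (z : Pl) (e : ℝ), dist y z = e → y - z = t • u + (x₁ - z) →
          t^2 + 2*t*⟪x₁ - z, u⟫ + ‖x₁ - z‖^2 = e^2 := by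
        intro z e he hdecomp
        have hnz : ‖y - z‖^2 = e^2 := by rw [← dist_eq_norm, he]
        rw [hdecomp, norm_add_sq_real, real_inner_smul_left, norm_smul,
          Real.norm_eq_abs, mul_pow, sq_abs, hu] at hnz
        rw [real_inner_comm]
        nlinarith [hnz]
      have hdist2 : dist y x₂ = a - t := by linarith
      have hdist3 : dist y x₃ = b - t := by linarith
      have hdec2 : y - x₂ = t • u + (x₁ - x₂) := by rw [htu]; abel
      have hdec3 : y - x₃ = t • u + (x₁ - x₃) := by rw [htu]; abel
      have hq2 := hexp2 x₂ (a - t) hdist2 hdec2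
      have hq3 := hexp2 x₃ (b - t) hdist3 hdec3
      rw [← hd₂, ← hi2] at hq2
      rw [← hd₃, ← hi3] at hq3
      have htA : 2*t*(a + i2) = A := by rw [hA']; linear_combination hq2
      have htB : 2*t*(b + i3) = B := by rw [hB']; linear_combination hq3
      have hwc : ⟪w, u⟫ = c := by
        rw [hw, inner_sub_left, real_inner_smul_left, real_inner_smul_left,
          ← hi2, ← hi3, hc]
        linear_combination (-(i3+b))*htA + (i2+a)*htB
      refine ⟨u, ⟨hu, hwc⟩, ?_⟩
      rw [hφ]
      show x₁ + (A/(2*(a + ⟪d₂,u⟫))) • u = y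
      have hteq : A/(2*(a + ⟪d₂,u⟫)) = t := by
        rw [← hi2]
        have h0 : 0 < a + i2 := by rw [hi2]; exact hden2 u hu
        field_simp
        linarith [htA]
      rw [hteq, htu]; abel
    · rintro ⟨u, ⟨hu, hwc⟩, hyu⟩
      obtain ⟨i2, hi2⟩ : ∃ i : ℝ, i = ⟪d₂,u⟫ := ⟨_, rfl⟩
      obtain ⟨i3, hi3⟩ : ∃ i : ℝ, i = ⟪d₃,u⟫ := ⟨_, rfl⟩
      have h0 : 0 < a + i2 := by rw [hi2]; exact hden2 u hu
      obtain ⟨t, htdef⟩ : ∃ t : ℝ, t = A/(2*(a + i2)) := ⟨_, rfl⟩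
      have ht : 0 < t := by rw [htdef]; exact div_pos hA (by linarith)
      have htA : 2*t*(a + i2) = A := by rw [htdef]; field_simp
      have hy : y = x₁ + t • u := by
        rw [← hyu, hφ]
        show x₁ + (A/(2*(a + ⟪d₂,u⟫))) • u = x₁ + t • u
        rw [← hi2, ← htdef]
      have hlin : A*i3 - B*i2 = a*B - b*A := by
        rw [hi2, hi3, ← real_inner_smul_left, ← real_inner_smul_left,
          ← inner_sub_left, ← hw, hwc, hc]
      have h3 : 0 < b + i3 := by nlinarith [mul_pos hB h0]
      have htB : 2*t*(b + i3) = B := by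
        have hident : A*(b+i3) = B*(a+i2) := by linear_combination hlin
        have h5 : A * (2*t*(b+i3) - B) = 0 := by
          linear_combination 2*t*hident + B*htA
        rcases mul_eq_zero.mp h5 with h6 | h6
        · exact absurd h6 (ne_of_gt hA)
        · linarith
      have huy1 : y - x₁ = t • u := by rw [hy]; abel
      have hdist1 : dist y x₁ = t := by
        rw [dist_eq_norm, huy1, norm_smul, hu, Real.norm_eq_abs, abs_of_pos ht, mul_one]
      have hside : ∀ (z : Pl) (dd : Pl) (e ii : ℝ), dd = x₁ - z → ii = ⟪dd, u⟫ →
          0 < e + ii → 2*t*(e + ii) = e^2 - ‖dd‖^2 → dist y z = e - t := by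
        intro z dd e ii hdd hii hpos hteq
        have hdec : y - z = t • u + dd := by rw [hy, hdd]; abel
        have hn2 : ‖y - z‖^2 = (e - t)^2 := by
          rw [hdec, norm_add_sq_real, real_inner_smul_left, norm_smul,
            Real.norm_eq_abs, mul_pow, sq_abs, hu, real_inner_comm dd u, ← hii]
          linear_combination hteq
        have hnn : 0 ≤ e^2 + 2*e*ii + ‖dd‖^2 := by
          have h1 : ‖e • u + dd‖^2 = e^2 + 2*e*ii + ‖dd‖^2 := by
            rw [norm_add_sq_real, real_inner_smul_left, norm_smul,
              Real.norm_eq_abs, mul_pow, sq_abs, hu, real_inner_comm dd u, ← hii]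
            ring
          have h2 : 0 ≤ ‖e • u + dd‖^2 := sq_nonneg _
          linarith [h1 ▸ h2]
        have hge : 0 ≤ e - t := by nlinarith [hpos, hteq, hnn]
        rw [dist_eq_norm]
        exact eq_of_sq_eq _ _ (norm_nonneg _) hge hn2
      have hd2' : dist y x₂ = a - t := by
        refine hside x₂ d₂ a i2 hd₂ hi2 h0 ?_
        rw [← hA']; exact htA
      have hd3' : dist y x₃ = b - t := by
        refine hside x₃ d₃ b i3 hd₃ hi3 h3 ?_
        rw [← hB']; exact htB
      rw [hdist1, hd2', hd3']
      constructor <;> ring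
  have hinj : Set.InjOn φ {u : Pl | ‖u‖ = 1 ∧ ⟪w, u⟫ = c} := by
    rintro u ⟨hu, -⟩ u' ⟨hu', -⟩ heq
    rw [hφ] at heq
    have h0 : 0 < a + ⟪d₂,u⟫ := hden2 u hu
    have h0' : 0 < a + ⟪d₂,u'⟫ := hden2 u' hu'
    have ht : 0 < A/(2*(a + ⟪d₂,u⟫)) := div_pos hA (by linarith)
    have ht' : 0 < A/(2*(a + ⟪d₂,u'⟫)) := div_pos hA (by linarith)
    have hv : (A/(2*(a + ⟪d₂,u⟫))) • u = (A/(2*(a + ⟪d₂,u'⟫))) • u' :=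
      add_left_cancel heq
    have hnorm : A/(2*(a + ⟪d₂,u⟫)) = A/(2*(a + ⟪d₂,u'⟫)) := by
      have h1 : ‖(A/(2*(a + ⟪d₂,u⟫))) • u‖ = ‖(A/(2*(a + ⟪d₂,u'⟫))) • u'‖ := by rw [hv]
      rwa [norm_smul, norm_smul, hu, hu', mul_one, mul_one, Real.norm_eq_abs,
        Real.norm_eq_abs, abs_of_pos ht, abs_of_pos ht'] at h1
    rw [hnorm] at hv
    exact smul_right_injective Pl (ne_of_gt ht') hv
  constructor
  · rw [hYU, Set.ncard_image_of_injOn hinj]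
    exact hcard
  · rw [hYU]
    exact hfin.image φ

lemma no_line (x₁ x₂ : Pl) (r₁ r₂ : ℝ) (h₂ : 0 ≤ r₂)
    (hlt : ‖x₂ - x₁‖ + r₂ < r₁) (L : AffineSubspace ℝ Pl)
    (h1 : LineTangent L x₁ r₁) (h2 : LineTangent L x₂ r₂)
    (hdim : Module.finrank ℝ L.direction = 1) : False := by
  obtain ⟨p, ⟨hpL, hpK⟩, -⟩ := h2
  have hpK' : dist p x₂ = r₂ := hpK
  have hp1 : dist p x₁ < r₁ := by
    have htri := dist_triangle p x₂ x₁
    rw [hpK', dist_eq_norm x₂ x₁] at htri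
    linarith
  have hne : L.direction ≠ ⊥ := by
    intro h
    rw [h, finrank_bot] at hdim
    norm_num at hdim
  obtain ⟨v, hvL, hv0⟩ := Submodule.exists_mem_ne_zero_of_ne_bot hne
  obtain ⟨v', hv'def⟩ : ∃ v' : Pl, v' = ‖v‖⁻¹ • v := ⟨_, rfl⟩
  have hvn : ‖v‖ ≠ 0 := norm_ne_zero_iff.mpr hv0
  have hv' : ‖v'‖ = 1 := by
    rw [hv'def, norm_smul, Real.norm_eq_abs, abs_inv, abs_of_nonneg (norm_nonneg v),
      inv_mul_cancel₀ hvn]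
  have hv'0 : v' ≠ 0 := by
    intro h; rw [h, norm_zero] at hv'; norm_num at hv'
  have hv'L : v' ∈ L.direction := by rw [hv'def]; exact Submodule.smul_mem _ _ hvL
  obtain ⟨β, hβ⟩ : ∃ β : ℝ, β = ⟪p - x₁, v'⟫ := ⟨_, rfl⟩
  have hdisc : 0 < β^2 + r₁^2 - ‖p - x₁‖^2 := by
    have h1' : ‖p - x₁‖ = dist p x₁ := (dist_eq_norm p x₁).symm
    nlinarith [sq_nonneg β, dist_nonneg (x := p) (y := x₁)]
  obtain ⟨D, hDdef⟩ : ∃ D : ℝ, D = √(β^2 + r₁^2 - ‖p - x₁‖^2) := ⟨_, rfl⟩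
  have hD : 0 < D := hDdef ▸ Real.sqrt_pos.mpr hdisc
  have hDsq : D^2 = β^2 + r₁^2 - ‖p - x₁‖^2 := hDdef ▸ Real.sq_sqrt (le_of_lt hdisc)
  have hdist : ∀ t : ℝ, dist (t • v' + p) x₁ ^ 2 = ‖p - x₁‖^2 + 2*t*β + t^2 := by
    intro t
    have hrw : t • v' + p - x₁ = (p - x₁) + t • v' := by abel
    rw [dist_eq_norm, hrw, norm_add_sq_real, real_inner_smul_right, norm_smul,
      Real.norm_eq_abs, mul_pow, sq_abs, hv', ← hβ]
    ring
  have hmem : ∀ t : ℝ, (t • v' + p) ∈ (L : Set Pl) := by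
    intro t
    have := AffineSubspace.vadd_mem_of_mem_direction
      (Submodule.smul_mem _ t hv'L) hpL
    simpa [vadd_eq_add] using this
  have hKmem : ∀ t : ℝ, ‖p - x₁‖^2 + 2*t*β + t^2 = r₁^2 → (t • v' + p) ∈ K x₁ r₁ := by
    intro t ht
    have hsq : dist (t • v' + p) x₁ ^ 2 = r₁^2 := by rw [hdist t, ht]
    exact eq_of_sq_eq _ _ dist_nonneg (by linarith [dist_nonneg (x := p) (y := x₁)]) hsq
  have hq1 : ((-β + D) • v' + p) ∈ (L : Set Pl) ∩ K x₁ r₁ :=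
    ⟨hmem _, hKmem _ (by linear_combination hDsq)⟩
  have hq2 : ((-β - D) • v' + p) ∈ (L : Set Pl) ∩ K x₁ r₁ :=
    ⟨hmem _, hKmem _ (by linear_combination hDsq)⟩
  obtain ⟨q, -, huniq⟩ := h1
  have he : (-β + D) • v' + p = (-β - D) • v' + p := by
    rw [huniq _ hq1, huniq _ hq2]
  have : ((-β + D) - (-β - D)) • v' = 0 := by
    rw [sub_smul]
    have := sub_eq_zero.mpr he
    have h5 : (-β + D) • v' + p - ((-β - D) • v' + p) = (-β + D) • v' - (-β - D) • v' := by abel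
    rw [← h5, he]
    simp
  rcases smul_eq_zero.mp this with h6 | h6
  · have : (2:ℝ) * D = 0 := by linarith [h6]
    linarith
  · exact hv'0 h6

lemma no_point (x₁ x₂ : Pl) (r₁ r₂ : ℝ) (hlt : ‖x₂ - x₁‖ + r₂ < r₁)
    (p : Pl) (hp1 : p ∈ K x₁ r₁) (hp2 : p ∈ K x₂ r₂) : False := by
  have h1 : dist p x₁ = r₁ := hp1
  have h2 : dist p x₂ = r₂ := hp2
  have htri := dist_triangle p x₂ x₁
  rw [h1, h2, dist_eq_norm] at htri
  linarith

def Ss (x₁ x₂ x₃ : Pl) (r₁ a b : ℝ) : Set (Pl × ℝ) :=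
  {ys | (dist ys.1 x₁ + dist ys.1 x₂ = a ∧ dist ys.1 x₁ + dist ys.1 x₃ = b) ∧
    ys.2 = r₁ - dist ys.1 x₁}

lemma sol_decomp (x₁ x₂ x₃ : Pl) (r₁ r₂ r₃ : ℝ) (h₂ : 0 < r₂) (h₃ : 0 < r₃)
    (h₁₂ : ‖x₂ - x₁‖ + r₂ < r₁) (h₁₃ : ‖x₃ - x₁‖ + r₃ < r₁) (h₂₃ : ‖x₂ - x₃‖ > r₂ + r₃) :
    {ys : Pl × ℝ | 0 < ys.2 ∧ CircleTangent ys.1 ys.2 x₁ r₁ ∧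
      CircleTangent ys.1 ys.2 x₂ r₂ ∧ CircleTangent ys.1 ys.2 x₃ r₃}
    = Ss x₁ x₂ x₃ r₁ (r₁+r₂) (r₁+r₃) ∪ Ss x₁ x₂ x₃ r₁ (r₁+r₂) (r₁-r₃) ∪
      Ss x₁ x₂ x₃ r₁ (r₁-r₂) (r₁+r₃) ∪ Ss x₁ x₂ x₃ r₁ (r₁-r₂) (r₁-r₃) := by
  have e21 : dist x₁ x₂ = ‖x₂ - x₁‖ := by rw [dist_comm, dist_eq_norm]
  have e31 : dist x₁ x₃ = ‖x₃ - x₁‖ := by rw [dist_comm, dist_eq_norm]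
  have e23 : dist x₂ x₃ = ‖x₂ - x₃‖ := dist_eq_norm _ _
  ext ⟨y, s⟩
  simp only [Set.mem_setOf_eq, Set.mem_union, Ss, CircleTangent]
  constructor
  · rintro ⟨hs, T₁, T₂, T₃⟩
    have tri12 : dist y x₁ ≤ dist y x₂ + ‖x₂ - x₁‖ := by
      have := dist_triangle y x₂ x₁; rwa [dist_eq_norm x₂ x₁] at this
    have tri21 : dist y x₂ ≤ dist y x₁ + ‖x₂ - x₁‖ := by
      have := dist_triangle y x₁ x₂; rwa [e21] at this
    have tri13 : dist y x₁ ≤ dist y x₃ + ‖x₃ - x₁‖ := by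
      have := dist_triangle y x₃ x₁; rwa [dist_eq_norm x₃ x₁] at this
    have tri31 : dist y x₃ ≤ dist y x₁ + ‖x₃ - x₁‖ := by
      have := dist_triangle y x₁ x₃; rwa [e31] at this
    have hT2u : dist y x₂ ≤ s + r₂ := by
      rcases T₂ with h | h
      · linarith [h.le]
      · rw [h]; exact (abs_le.mpr ⟨by linarith, by linarith⟩ : |s - r₂| ≤ s + r₂)
    have hT2l : s - r₂ ≤ dist y x₂ := by
      rcases T₂ with h | h
      · linarith [h.ge]
      · rw [h]; exact le_abs_self _
    have hT3u : dist y x₃ ≤ s + r₃ := by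
      rcases T₃ with h | h
      · linarith [h.le]
      · rw [h]; exact (abs_le.mpr ⟨by linarith, by linarith⟩ : |s - r₃| ≤ s + r₃)
    have hT3l : s - r₃ ≤ dist y x₃ := by
      rcases T₃ with h | h
      · linarith [h.ge]
      · rw [h]; exact le_abs_self _
    have hD1 : dist y x₁ = r₁ - s ∧ s < r₁ := by
      rcases T₁ with h | h
      · exfalso; linarith
      · rcases le_or_gt r₁ s with hge | hlt
        · exfalso
          rw [abs_of_nonneg (by linarith)] at h
          linarith
        · rw [abs_of_nonpos (by linarith)] at h
          exact ⟨by linarith, hlt⟩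
    obtain ⟨hD1e, hs1⟩ := hD1
    have hD2 : dist y x₂ = s + r₂ ∨ dist y x₂ = s - r₂ := by
      rcases T₂ with h | h
      · exact Or.inl h
      · rcases le_or_gt s r₂ with hle | hgt
        · exfalso
          rw [abs_of_nonpos (by linarith)] at h
          linarith
        · rw [abs_of_pos (by linarith)] at h
          exact Or.inr h
    have hD3 : dist y x₃ = s + r₃ ∨ dist y x₃ = s - r₃ := by
      rcases T₃ with h | h
      · exact Or.inl h
      · rcases le_or_gt s r₃ with hle | hgt
        · exfalso
          rw [abs_of_nonpos (by linarith)] at h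
          linarith
        · rw [abs_of_pos (by linarith)] at h
          exact Or.inr h
    rcases hD2 with h2 | h2 <;> rcases hD3 with h3 | h3
    · exact Or.inl (Or.inl (Or.inl ⟨⟨by linarith, by linarith⟩, by linarith⟩))
    · exact Or.inl (Or.inl (Or.inr ⟨⟨by linarith, by linarith⟩, by linarith⟩))
    · exact Or.inl (Or.inr ⟨⟨by linarith, by linarith⟩, by linarith⟩)
    · exact Or.inr ⟨⟨by linarith, by linarith⟩, by linarith⟩
  · have trio : dist x₂ x₃ ≤ dist y x₂ + dist y x₃ := by
      have := dist_triangle x₂ y x₃; rwa [dist_comm x₂ y] at this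
    have hd1n : 0 ≤ dist y x₁ := dist_nonneg
    have hd2n : 0 ≤ dist y x₂ := dist_nonneg
    have hd3n : 0 ≤ dist y x₃ := dist_nonneg
    rintro (((⟨⟨e2, e3⟩, es⟩ | ⟨⟨e2, e3⟩, es⟩) | ⟨⟨e2, e3⟩, es⟩) | ⟨⟨e2, e3⟩, es⟩) <;>
    · have hs : 0 < s := by
        by_contra hs0
        push_neg at hs0
        rw [e23] at trio
        linarith
      refine ⟨hs, Or.inr ?_, ?_, ?_⟩
      · rw [abs_of_nonpos (by linarith)]; linarith
      · first
          | (exact Or.inl (by linarith))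
          | (refine Or.inr ?_; rw [abs_of_nonneg (by linarith)]; linarith)
      · first
          | (exact Or.inl (by linarith))
          | (refine Or.inr ?_; rw [abs_of_nonneg (by linarith)]; linarith)

lemma Ss_card (x₁ x₂ x₃ : Pl) (r₁ a b : ℝ)
    (ha : ‖x₁ - x₂‖ < a) (hb : ‖x₁ - x₃‖ < b) (hab : (a - b)^2 < ‖x₂ - x₃‖^2) :
    (Ss x₁ x₂ x₃ r₁ a b).ncard = 2 ∧ (Ss x₁ x₂ x₃ r₁ a b).Finite := by
  obtain ⟨hcard, hfin⟩ := ellipse_two x₁ x₂ x₃ a b ha hb hab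
  have himg : Ss x₁ x₂ x₃ r₁ a b = (fun y => (y, r₁ - dist y x₁)) ''
      {y : Pl | dist y x₁ + dist y x₂ = a ∧ dist y x₁ + dist y x₃ = b} := by
    ext ⟨y, s⟩
    simp only [Ss, Set.mem_setOf_eq, Set.mem_image, Prod.mk.injEq]
    constructor
    · rintro ⟨⟨e2, e3⟩, es⟩
      exact ⟨y, ⟨e2, e3⟩, rfl, es.symm⟩
    · rintro ⟨y', ⟨e2, e3⟩, rfl, hs⟩
      exact ⟨⟨e2, e3⟩, hs.symm⟩
  have hinj : Function.Injective (fun y : Pl => (y, r₁ - dist y x₁)) := by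
    intro y y' h
    exact congrArg Prod.fst h
  rw [himg]
  exact ⟨(Set.ncard_image_of_injective _ hinj).trans hcard, hfin.image _⟩

lemma Ss_disj (x₁ x₂ x₃ : Pl) (r₁ a b a' b' : ℝ) (h : a ≠ a' ∨ b ≠ b') :
    Disjoint (Ss x₁ x₂ x₃ r₁ a b) (Ss x₁ x₂ x₃ r₁ a' b') := by
  rw [Set.disjoint_left]
  rintro ⟨y, s⟩ ⟨⟨e2, e3⟩, -⟩ ⟨⟨e2', e3'⟩, -⟩
  rcases h with h | h
  · exact h (by linarith)
  · exact h (by linarith)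

/-- If `C₁` strictly surrounds `C₂` and `C₃`, which are externally disjoint from each
other, then the Apollonius problem has exactly 8 solutions. -/
theorem apollonius_surrounding_eight_solutions (x₁ x₂ x₃ : Pl) (r₁ r₂ r₃ : ℝ)
    (h₁ : 0 < r₁) (h₂ : 0 < r₂) (h₃ : 0 < r₃)
    (h₁₂ : ‖x₂ - x₁‖ + r₂ < r₁) (h₁₃ : ‖x₃ - x₁‖ + r₃ < r₁)
    (h₂₃ : ‖x₂ - x₃‖ > r₂ + r₃) :
    Nat.card (ApolloniusSolutions ![x₁, x₂, x₃] ![r₁, r₂, r₃]) = 8 := by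
  have ex0 : (![x₁, x₂, x₃] : Fin 3 → Pl) 0 = x₁ := rfl
  have ex1 : (![x₁, x₂, x₃] : Fin 3 → Pl) 1 = x₂ := rfl
  have ex2 : (![x₁, x₂, x₃] : Fin 3 → Pl) 2 = x₃ := rfl
  have er0 : (![r₁, r₂, r₃] : Fin 3 → ℝ) 0 = r₁ := rfl
  have er1 : (![r₁, r₂, r₃] : Fin 3 → ℝ) 1 = r₂ := rfl
  have er2 : (![r₁, r₂, r₃] : Fin 3 → ℝ) 2 = r₃ := rfl
  haveI hline : IsEmpty {L : AffineSubspace ℝ Pl // Module.finrank ℝ L.direction = 1 ∧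
      ∀ i, LineTangent L (![x₁, x₂, x₃] i) (![r₁, r₂, r₃] i)} := by
    refine ⟨fun ⟨L, hdim, hL⟩ => ?_⟩
    have hl1 : LineTangent L x₁ r₁ := by rw [← ex0, ← er0]; exact hL 0
    have hl2 : LineTangent L x₂ r₂ := by rw [← ex1, ← er1]; exact hL 1
    exact no_line x₁ x₂ r₁ r₂ (le_of_lt h₂) h₁₂ L hl1 hl2 hdim
  haveI hpt : IsEmpty {p : Pl // ∀ i, p ∈ K (![x₁, x₂, x₃] i) (![r₁, r₂, r₃] i)} := by
    refine ⟨fun ⟨p, hp⟩ => ?_⟩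
    have hp1 : p ∈ K x₁ r₁ := by rw [← ex0, ← er0]; exact hp 0
    have hp2 : p ∈ K x₂ r₂ := by rw [← ex1, ← er1]; exact hp 1
    exact no_point x₁ x₂ r₁ r₂ h₁₂ p hp1 hp2
  unfold ApolloniusSolutions
  rw [Nat.card_congr (Equiv.sumEmpty _ _)]
  have hiff : ∀ ys : Pl × ℝ,
      (0 < ys.2 ∧ ∀ i, CircleTangent ys.1 ys.2 (![x₁, x₂, x₃] i) (![r₁, r₂, r₃] i)) ↔
      (0 < ys.2 ∧ CircleTangent ys.1 ys.2 x₁ r₁ ∧ CircleTangent ys.1 ys.2 x₂ r₂ ∧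
        CircleTangent ys.1 ys.2 x₃ r₃) := by
    intro ys
    constructor
    · rintro ⟨hs, h⟩
      exact ⟨hs, by rw [← ex0, ← er0]; exact h 0, by rw [← ex1, ← er1]; exact h 1,
        by rw [← ex2, ← er2]; exact h 2⟩
    · rintro ⟨hs, ha, hb, hc⟩
      refine ⟨hs, fun i => ?_⟩
      fin_cases i
      · exact ha
      · exact hb
      · exact hc
  rw [Nat.card_congr (Equiv.subtypeEquivRight hiff)]
  have hcoe : Nat.card {ys : Pl × ℝ // 0 < ys.2 ∧ CircleTangent ys.1 ys.2 x₁ r₁ ∧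
      CircleTangent ys.1 ys.2 x₂ r₂ ∧ CircleTangent ys.1 ys.2 x₃ r₃}
      = ({ys : Pl × ℝ | 0 < ys.2 ∧ CircleTangent ys.1 ys.2 x₁ r₁ ∧
      CircleTangent ys.1 ys.2 x₂ r₂ ∧ CircleTangent ys.1 ys.2 x₃ r₃}).ncard :=
    Nat.card_coe_set_eq _
  rw [hcoe, sol_decomp x₁ x₂ x₃ r₁ r₂ r₃ h₂ h₃ h₁₂ h₁₃ h₂₃]
  -- hypotheses for the four Ss sets
  have hn12 : ‖x₁ - x₂‖ = ‖x₂ - x₁‖ := norm_sub_rev _ _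
  have hn13 : ‖x₁ - x₃‖ = ‖x₃ - x₁‖ := norm_sub_rev _ _
  have hnn : (0:ℝ) ≤ ‖x₂ - x₃‖ := norm_nonneg _
  have c1 := Ss_card x₁ x₂ x₃ r₁ (r₁+r₂) (r₁+r₃) (by rw [hn12]; linarith)
    (by rw [hn13]; linarith) (by nlinarith)
  have c2 := Ss_card x₁ x₂ x₃ r₁ (r₁+r₂) (r₁-r₃) (by rw [hn12]; linarith)
    (by rw [hn13]; linarith) (by nlinarith)
  have c3 := Ss_card x₁ x₂ x₃ r₁ (r₁-r₂) (r₁+r₃) (by rw [hn12]; linarith)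
    (by rw [hn13]; linarith) (by nlinarith)
  have c4 := Ss_card x₁ x₂ x₃ r₁ (r₁-r₂) (r₁-r₃) (by rw [hn12]; linarith)
    (by rw [hn13]; linarith) (by nlinarith)
  have d12 := Ss_disj x₁ x₂ x₃ r₁ (r₁+r₂) (r₁+r₃) (r₁+r₂) (r₁-r₃) (Or.inr (by linarith))
  have d13 := Ss_disj x₁ x₂ x₃ r₁ (r₁+r₂) (r₁+r₃) (r₁-r₂) (r₁+r₃) (Or.inl (by linarith))
  have d14 := Ss_disj x₁ x₂ x₃ r₁ (r₁+r₂) (r₁+r₃) (r₁-r₂) (r₁-r₃) (Or.inl (by linarith))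
  have d23 := Ss_disj x₁ x₂ x₃ r₁ (r₁+r₂) (r₁-r₃) (r₁-r₂) (r₁+r₃) (Or.inl (by linarith))
  have d24 := Ss_disj x₁ x₂ x₃ r₁ (r₁+r₂) (r₁-r₃) (r₁-r₂) (r₁-r₃) (Or.inl (by linarith))
  have d34 := Ss_disj x₁ x₂ x₃ r₁ (r₁-r₂) (r₁+r₃) (r₁-r₂) (r₁-r₃) (Or.inr (by linarith))
  rw [Set.ncard_union_eq (by
      exact Set.disjoint_union_left.mpr ⟨Set.disjoint_union_left.mpr ⟨d14, d24⟩, d34⟩)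
    (((c1.2.union c2.2).union c3.2)) c4.2]
  rw [Set.ncard_union_eq (Set.disjoint_union_left.mpr ⟨d13, d23⟩) (c1.2.union c2.2) c3.2]
  rw [Set.ncard_union_eq d12 c1.2 c2.2]
  rw [c1.1, c2.1, c3.1, c4.1]
end
end
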